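/- Let F : ℝ × ℝ → ℝ be four times continuously differentiable with F(x,x) = 1 for all x ∈ ℝ. Define C₂(y) := ∂²_{x₁} F(y,y) − 2 ∂_{x₁}∂_{x₂} F(y,y) + ∂²_{x₂} F(y,y). Then for each fixed x ∈ ℝ, the function h ↦ F(x−h, x) + F(x, x−h) − 2 − (h²/4) · C₂(x − h/2) is O(h⁴) as h → 0. -/

import Mathlib

open Asymptotics Filter

/-- The diagonal second-difference quantity
`C₂(y) := ∂²_{x₁} F(y,y) − 2 ∂_{x₁}∂_{x₂} F(y,y) + ∂²_{x₂} F(y,y)`. -/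
noncomputable def C2diag (F : ℝ × ℝ → ℝ) (y : ℝ) : ℝ :=
  deriv (deriv (fun z => F (z, y))) y
    - 2 * deriv (fun a => deriv (fun b => F (a, b)) y) y
    + deriv (deriv (fun z => F (y, z))) y

-- generic step: f(0)=0, f' = O(h^k)  ==>  f = O(h^(k+1))
lemma lemA (f f' : ℝ → ℝ) (k : ℕ) (h0 : f 0 = 0)
    (hd : ∀ t, HasDerivAt f (f' t) t)
    (hO : f' =O[nhds 0] fun h : ℝ => h ^ k) :
    f =O[nhds 0] fun h : ℝ => h ^ (k + 1) := by
  rw [isBigO_iff] at hO ⊢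
  obtain ⟨C, hC⟩ := hO
  rw [Metric.eventually_nhds_iff] at hC
  obtain ⟨ε, hε, hb⟩ := hC
  refine ⟨max C 0, ?_⟩
  rw [Metric.eventually_nhds_iff]
  refine ⟨ε, hε, fun {h} hh => ?_⟩
  have habs : ∀ t ∈ Set.uIcc 0 h, |t| ≤ |h| := by
    intro t ht
    rcases Set.mem_uIcc.1 ht with ⟨h1, h2⟩ | ⟨h1, h2⟩
    · rw [abs_of_nonneg h1, abs_of_nonneg (h1.trans h2)]; exact h2
    · rw [abs_of_nonpos h2, abs_of_nonpos (h1.trans h2)]; exact neg_le_neg h1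
  have hbound : ∀ t ∈ Set.uIcc 0 h, ‖deriv f t‖ ≤ max C 0 * |h| ^ k := by
    intro t ht
    have h1 : |t| ≤ |h| := habs t ht
    have h2 : dist t 0 < ε := by
      rw [Real.dist_eq, sub_zero]
      exact lt_of_le_of_lt h1 (by simpa [Real.dist_eq] using hh)
    have h3 : ‖f' t‖ ≤ C * ‖t ^ k‖ := hb h2
    rw [(hd t).deriv]
    calc ‖f' t‖ ≤ C * ‖t ^ k‖ := h3
      _ ≤ max C 0 * |h| ^ k := by
          have : ‖t ^ k‖ = |t| ^ k := by rw [Real.norm_eq_abs, abs_pow]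
          rw [this]
          have h4 : |t| ^ k ≤ |h| ^ k := pow_le_pow_left₀ (abs_nonneg t) h1 k
          have h5 : C * |t| ^ k ≤ max C 0 * |t| ^ k :=
            mul_le_mul_of_nonneg_right (le_max_left _ _) (pow_nonneg (abs_nonneg t) k)
          exact h5.trans (mul_le_mul_of_nonneg_left h4 (le_max_right _ _))
  have key := Convex.norm_image_sub_le_of_norm_deriv_le
    (fun t _ => (hd t).differentiableAt) hbound (convex_uIcc (0:ℝ) h)
    Set.left_mem_uIcc Set.right_mem_uIcc
  rw [h0, sub_zero, sub_zero] at key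
  calc ‖f h‖ ≤ max C 0 * |h| ^ k * ‖h‖ := key
    _ = max C 0 * ‖h ^ (k+1)‖ := by
        rw [Real.norm_eq_abs, Real.norm_eq_abs, abs_pow, pow_succ]; ring

-- second-order Taylor remainder
lemma lemT2 (f f1 : ℝ → ℝ) (hd : ∀ t, HasDerivAt f (f1 t) t)
    (h2 : DifferentiableAt ℝ f1 0) :
    (fun h : ℝ => f h - f 0 - f1 0 * h) =O[nhds 0] fun h : ℝ => h ^ 2 := by
  apply lemA _ (fun t => f1 t - f1 0) 1 (by ring)
  · intro t
    have H := ((hd t).sub_const (f 0)).sub ((hasDerivAt_id t).const_mul (f1 0))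
    exact H.congr_deriv (by ring)
  · have := h2.isBigO_sub
    simpa using this

-- fourth-order Taylor remainder
lemma lemT4 (f f1 f2 f3 : ℝ → ℝ)
    (hd1 : ∀ t, HasDerivAt f (f1 t) t)
    (hd2 : ∀ t, HasDerivAt f1 (f2 t) t)
    (hd3 : ∀ t, HasDerivAt f2 (f3 t) t)
    (h4 : DifferentiableAt ℝ f3 0) :
    (fun h : ℝ => f h - f 0 - f1 0 * h - f2 0 * h ^ 2 / 2 - f3 0 * h ^ 3 / 6)
      =O[nhds 0] fun h : ℝ => h ^ 4 := by
  have hA3 : (fun t : ℝ => f2 t - f2 0 - f3 0 * t) =O[nhds 0] fun h : ℝ => h ^ 2 :=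
    lemT2 f2 f3 hd3 h4
  have hA2 : (fun t : ℝ => f1 t - f1 0 - f2 0 * t - f3 0 * t ^ 2 / 2)
      =O[nhds 0] fun h : ℝ => h ^ 3 := by
    apply lemA _ (fun t => f2 t - f2 0 - f3 0 * t) 2 (by ring)
    · intro t
      have H := (((hd2 t).sub_const (f1 0)).sub ((hasDerivAt_id t).const_mul (f2 0))).sub
        (((hasDerivAt_pow 2 t).const_mul (f3 0)).div_const 2)
      exact H.congr_deriv (by ring)
    · exact hA3
  apply lemA _ (fun t => f1 t - f1 0 - f2 0 * t - f3 0 * t ^ 2 / 2) 3 (by ring)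
  · intro t
    have H := ((((hd1 t).sub_const (f 0)).sub ((hasDerivAt_id t).const_mul (f1 0))).sub
        (((hasDerivAt_pow 2 t).const_mul (f2 0)).div_const 2)).sub
        (((hasDerivAt_pow 3 t).const_mul (f3 0)).div_const 6)
    exact H.congr_deriv (by ring)
  · exact hA2

-- chain rule along a line
lemma chain_line {E : Type*} [NormedAddCommGroup E] [NormedSpace ℝ E]
    (G : ℝ × ℝ → E) (hG : Differentiable ℝ G) (p v : ℝ × ℝ) (t : ℝ) :
    HasDerivAt (fun h : ℝ => G (p + h • v)) (fderiv ℝ G (p + t • v) v) t := by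
  have hline : HasDerivAt (fun h : ℝ => p + h • v) v t := by
    simpa using ((hasDerivAt_id t).smul_const v).const_add p
  exact (hG (p + t • v)).hasFDerivAt.comp_hasDerivAt t hline

section Aux
variable {F : ℝ × ℝ → ℝ}

variable (hF : ContDiff ℝ 4 F)
include hF

lemma hd0 : Differentiable ℝ F := hF.differentiable (by norm_num)
lemma hd1 : Differentiable ℝ (fderiv ℝ F) :=
  (hF.fderiv_right (by norm_num) : ContDiff ℝ 3 _).differentiable (by norm_num)
lemma hd2 : Differentiable ℝ (fderiv ℝ (fderiv ℝ F)) :=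
  ((hF.fderiv_right (by norm_num) : ContDiff ℝ 3 _).fderiv_right (by norm_num) :
    ContDiff ℝ 2 _).differentiable (by norm_num)

lemma L2 (p v u : ℝ × ℝ) (t : ℝ) :
    HasDerivAt (fun h : ℝ => fderiv ℝ F (p + h • v) u)
      (fderiv ℝ (fderiv ℝ F) (p + t • v) v u) t := by
  have h := (chain_line (fderiv ℝ F) (hd1 hF) p v t).clm_apply (hasDerivAt_const t u)
  simpa using h

lemma sym2 (q u v : ℝ × ℝ) :
    fderiv ℝ (fderiv ℝ F) q u v = fderiv ℝ (fderiv ℝ F) q v u :=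
  second_derivative_symmetric (fun y => (hd0 hF y).hasFDerivAt) ((hd1 hF q).hasFDerivAt) u v

lemma partial1 (a b : ℝ) :
    deriv (fun z : ℝ => F (z, b)) a = fderiv ℝ F (a, b) ((1:ℝ), (0:ℝ)) := by
  have h := chain_line F (hd0 hF) ((0:ℝ), b) ((1:ℝ), (0:ℝ)) a
  have ef : (fun h' : ℝ => F (((0:ℝ), b) + h' • ((1:ℝ), (0:ℝ)))) = fun z : ℝ => F (z, b) := by
    funext z
    have : ((0:ℝ), b) + z • ((1:ℝ), (0:ℝ)) = (z, b) := by simp [Prod.ext_iff]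
    rw [this]
  rw [ef] at h
  have h2 := h.deriv
  rwa [show ((0:ℝ), b) + a • ((1:ℝ), (0:ℝ)) = (a, b) by simp [Prod.ext_iff]] at h2

lemma partial2 (a b : ℝ) :
    deriv (fun z : ℝ => F (a, z)) b = fderiv ℝ F (a, b) ((0:ℝ), (1:ℝ)) := by
  have h := chain_line F (hd0 hF) (a, (0:ℝ)) ((0:ℝ), (1:ℝ)) b
  have ef : (fun h' : ℝ => F ((a, (0:ℝ)) + h' • ((0:ℝ), (1:ℝ)))) = fun z : ℝ => F (a, z) := by
    funext z
    have : (a, (0:ℝ)) + z • ((0:ℝ), (1:ℝ)) = (a, z) := by simp [Prod.ext_iff]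
    rw [this]
  rw [ef] at h
  have h2 := h.deriv
  rwa [show (a, (0:ℝ)) + b • ((0:ℝ), (1:ℝ)) = (a, b) by simp [Prod.ext_iff]] at h2

lemma partialD1 (b y : ℝ) (u : ℝ × ℝ) :
    deriv (fun a : ℝ => fderiv ℝ F (a, b) u) y
      = fderiv ℝ (fderiv ℝ F) (y, b) ((1:ℝ), (0:ℝ)) u := by
  have h := L2 hF ((0:ℝ), b) ((1:ℝ), (0:ℝ)) u y
  have ef : (fun h' : ℝ => fderiv ℝ F (((0:ℝ), b) + h' • ((1:ℝ), (0:ℝ))) u)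
      = fun a : ℝ => fderiv ℝ F (a, b) u := by
    funext z
    have : ((0:ℝ), b) + z • ((1:ℝ), (0:ℝ)) = (z, b) := by simp [Prod.ext_iff]
    rw [this]
  rw [ef] at h
  have h2 := h.deriv
  rwa [show ((0:ℝ), b) + y • ((1:ℝ), (0:ℝ)) = (y, b) by simp [Prod.ext_iff]] at h2

lemma partialD2 (a y : ℝ) (u : ℝ × ℝ) :
    deriv (fun b : ℝ => fderiv ℝ F (a, b) u) y
      = fderiv ℝ (fderiv ℝ F) (a, y) ((0:ℝ), (1:ℝ)) u := by
  have h := L2 hF (a, (0:ℝ)) ((0:ℝ), (1:ℝ)) u y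
  have ef : (fun h' : ℝ => fderiv ℝ F ((a, (0:ℝ)) + h' • ((0:ℝ), (1:ℝ))) u)
      = fun b : ℝ => fderiv ℝ F (a, b) u := by
    funext z
    have : (a, (0:ℝ)) + z • ((0:ℝ), (1:ℝ)) = (a, z) := by simp [Prod.ext_iff]
    rw [this]
  rw [ef] at h
  have h2 := h.deriv
  rwa [show (a, (0:ℝ)) + y • ((0:ℝ), (1:ℝ)) = (a, y) by simp [Prod.ext_iff]] at h2

lemma c2diag_eq (y : ℝ) :
    C2diag F y = fderiv ℝ (fderiv ℝ F) (y, y) ((1:ℝ), (-1:ℝ)) ((1:ℝ), (-1:ℝ)) := by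
  have eA : deriv (deriv (fun z : ℝ => F (z, y))) y
      = fderiv ℝ (fderiv ℝ F) (y, y) ((1:ℝ), (0:ℝ)) ((1:ℝ), (0:ℝ)) := by
    have e1 : deriv (fun z : ℝ => F (z, y)) = fun a : ℝ => fderiv ℝ F (a, y) ((1:ℝ), (0:ℝ)) :=
      funext fun a => partial1 hF a y
    rw [e1, partialD1 hF]
  have eB : deriv (fun a : ℝ => deriv (fun b : ℝ => F (a, b)) y) y
      = fderiv ℝ (fderiv ℝ F) (y, y) ((1:ℝ), (0:ℝ)) ((0:ℝ), (1:ℝ)) := by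
    have e1 : (fun a : ℝ => deriv (fun b : ℝ => F (a, b)) y)
        = fun a : ℝ => fderiv ℝ F (a, y) ((0:ℝ), (1:ℝ)) :=
      funext fun a => partial2 hF a y
    rw [e1, partialD1 hF]
  have eC : deriv (deriv (fun z : ℝ => F (y, z))) y
      = fderiv ℝ (fderiv ℝ F) (y, y) ((0:ℝ), (1:ℝ)) ((0:ℝ), (1:ℝ)) := by
    have e1 : deriv (fun z : ℝ => F (y, z)) = fun b : ℝ => fderiv ℝ F (y, b) ((0:ℝ), (1:ℝ)) :=
      funext fun b => partial2 hF y b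
    rw [e1, partialD2 hF]
  rw [C2diag, eA, eB, eC]
  have hw : ((1:ℝ), (-1:ℝ)) = ((1:ℝ), (0:ℝ)) - ((0:ℝ), (1:ℝ)) := by simp [Prod.ext_iff]
  rw [hw, map_sub]
  simp only [ContinuousLinearMap.sub_apply, map_sub]
  rw [sym2 hF (y, y) ((0:ℝ), (1:ℝ)) ((1:ℝ), (0:ℝ))]
  ring


noncomputable instance instNACG1 : NormedAddCommGroup (ℝ × ℝ →L[ℝ] ℝ) :=
  ContinuousLinearMap.toNormedAddCommGroup
noncomputable instance instNS1 : NormedSpace ℝ (ℝ × ℝ →L[ℝ] ℝ) :=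
  ContinuousLinearMap.toNormedSpace
noncomputable instance instNACG2 : NormedAddCommGroup (ℝ × ℝ →L[ℝ] ℝ × ℝ →L[ℝ] ℝ) :=
  ContinuousLinearMap.toNormedAddCommGroup
noncomputable instance instNS2 : NormedSpace ℝ (ℝ × ℝ →L[ℝ] ℝ × ℝ →L[ℝ] ℝ) :=
  ContinuousLinearMap.toNormedSpace
noncomputable instance instNACG3 : NormedAddCommGroup (ℝ × ℝ →L[ℝ] ℝ × ℝ →L[ℝ] ℝ × ℝ →L[ℝ] ℝ) :=
  ContinuousLinearMap.toNormedAddCommGroup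
noncomputable instance instNS3 : NormedSpace ℝ (ℝ × ℝ →L[ℝ] ℝ × ℝ →L[ℝ] ℝ × ℝ →L[ℝ] ℝ) :=
  ContinuousLinearMap.toNormedSpace
noncomputable instance instNACG4 : NormedAddCommGroup (ℝ × ℝ →L[ℝ] ℝ × ℝ →L[ℝ] ℝ × ℝ →L[ℝ] ℝ × ℝ →L[ℝ] ℝ) :=
  ContinuousLinearMap.toNormedAddCommGroup
noncomputable instance instNS4 : NormedSpace ℝ (ℝ × ℝ →L[ℝ] ℝ × ℝ →L[ℝ] ℝ × ℝ →L[ℝ] ℝ × ℝ →L[ℝ] ℝ) :=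
  ContinuousLinearMap.toNormedSpace

lemma hd3 : Differentiable ℝ (fderiv ℝ (fderiv ℝ (fderiv ℝ F))) :=
  (((hF.fderiv_right (by norm_num) : ContDiff ℝ 3 _).fderiv_right (by norm_num) :
    ContDiff ℝ 2 _).fderiv_right (by norm_num) : ContDiff ℝ 1 _).differentiable (by norm_num)


lemma L3 (p v u w : ℝ × ℝ) (t : ℝ) :
    HasDerivAt (fun h : ℝ => fderiv ℝ (fderiv ℝ F) (p + h • v) u w)
      (fderiv ℝ (fderiv ℝ (fderiv ℝ F)) (p + t • v) v u w) t := by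
  have h := ((chain_line (fderiv ℝ (fderiv ℝ F)) (hd2 hF) p v t).clm_apply
    (hasDerivAt_const t u)).clm_apply (hasDerivAt_const t w)
  simpa using h


lemma L4 (p v u w z : ℝ × ℝ) (t : ℝ) :
    HasDerivAt (fun h : ℝ => fderiv ℝ (fderiv ℝ (fderiv ℝ F)) (p + h • v) u w z)
      (fderiv ℝ (fderiv ℝ (fderiv ℝ (fderiv ℝ F))) (p + t • v) v u w z) t := by
  have h := (((chain_line (fderiv ℝ (fderiv ℝ (fderiv ℝ F))) (hd3 hF) p v t).clm_apply
    (hasDerivAt_const t u)).clm_apply (hasDerivAt_const t w)).clm_apply (hasDerivAt_const t z)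
  simpa using h


lemma sym12 (q α β γ : ℝ × ℝ) :
    fderiv ℝ (fderiv ℝ (fderiv ℝ F)) q α β γ
      = fderiv ℝ (fderiv ℝ (fderiv ℝ F)) q β α γ :=
  congrArg (fun L => L γ)
    (second_derivative_symmetric (fun y => (hd1 hF y).hasFDerivAt) ((hd2 hF q).hasFDerivAt) α β)

lemma sym23 (q α β γ : ℝ × ℝ) :
    fderiv ℝ (fderiv ℝ (fderiv ℝ F)) q α β γ
      = fderiv ℝ (fderiv ℝ (fderiv ℝ F)) q α γ β := by
  have h1 := L3 hF q α β γ 0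
  have h2 := L3 hF q α γ β 0
  have e : (fun h : ℝ => fderiv ℝ (fderiv ℝ F) (q + h • α) β γ)
      = fun h : ℝ => fderiv ℝ (fderiv ℝ F) (q + h • α) γ β :=
    funext fun h => sym2 hF _ β γ
  rw [e] at h1
  have := h1.unique h2
  simpa using this



variable (hdiag : ∀ x : ℝ, F (x, x) = 1)
include hdiag

lemma diag1 (y : ℝ) : fderiv ℝ F (y, y) ((1:ℝ), (1:ℝ)) = 0 := by
  have h := chain_line F (hd0 hF) ((0:ℝ), (0:ℝ)) ((1:ℝ), (1:ℝ)) y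
  have e : (fun h' : ℝ => F (((0:ℝ), (0:ℝ)) + h' • ((1:ℝ), (1:ℝ)))) = fun _ => (1:ℝ) := by
    funext s
    have : ((0:ℝ), (0:ℝ)) + s • ((1:ℝ), (1:ℝ)) = (s, s) := by
      simp [Prod.ext_iff]
    rw [this, hdiag]
  rw [e] at h
  have h2 := h.unique (hasDerivAt_const y 1)
  have e2 : ((0:ℝ), (0:ℝ)) + y • ((1:ℝ), (1:ℝ)) = (y, y) := by simp [Prod.ext_iff]
  rwa [e2] at h2

lemma diag2 (y : ℝ) :
    fderiv ℝ (fderiv ℝ F) (y, y) ((1:ℝ), (1:ℝ)) ((1:ℝ), (1:ℝ)) = 0 := by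
  have h := L2 hF ((0:ℝ), (0:ℝ)) ((1:ℝ), (1:ℝ)) ((1:ℝ), (1:ℝ)) y
  have e : (fun h' : ℝ => fderiv ℝ F (((0:ℝ), (0:ℝ)) + h' • ((1:ℝ), (1:ℝ))) ((1:ℝ), (1:ℝ)))
      = fun _ => (0:ℝ) := by
    funext s
    have : ((0:ℝ), (0:ℝ)) + s • ((1:ℝ), (1:ℝ)) = (s, s) := by simp [Prod.ext_iff]
    rw [this, diag1 hF hdiag]
  rw [e] at h
  have h2 := h.unique (hasDerivAt_const y 0)
  have e2 : ((0:ℝ), (0:ℝ)) + y • ((1:ℝ), (1:ℝ)) = (y, y) := by simp [Prod.ext_iff]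
  rwa [e2] at h2

lemma diag3 (y : ℝ) :
    fderiv ℝ (fderiv ℝ (fderiv ℝ F)) (y, y) ((1:ℝ), (1:ℝ)) ((1:ℝ), (1:ℝ)) ((1:ℝ), (1:ℝ)) = 0 := by
  have h := L3 hF ((0:ℝ), (0:ℝ)) ((1:ℝ), (1:ℝ)) ((1:ℝ), (1:ℝ)) ((1:ℝ), (1:ℝ)) y
  have e : (fun h' : ℝ => fderiv ℝ (fderiv ℝ F) (((0:ℝ), (0:ℝ)) + h' • ((1:ℝ), (1:ℝ)))
      ((1:ℝ), (1:ℝ)) ((1:ℝ), (1:ℝ))) = fun _ => (0:ℝ) := by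
    funext s
    have : ((0:ℝ), (0:ℝ)) + s • ((1:ℝ), (1:ℝ)) = (s, s) := by simp [Prod.ext_iff]
    rw [this, diag2 hF hdiag]
  rw [e] at h
  have h2 := h.unique (hasDerivAt_const y 0)
  have e2 : ((0:ℝ), (0:ℝ)) + y • ((1:ℝ), (1:ℝ)) = (y, y) := by simp [Prod.ext_iff]
  rwa [e2] at h2


end Aux

section MainProof
variable {F : ℝ × ℝ → ℝ}

lemma bigO_aux (hF : ContDiff ℝ 4 F) (hdiag : ∀ x : ℝ, F (x, x) = 1) (x : ℝ) :
    (fun h : ℝ => F (x - h, x) + F (x, x - h) - 2 - h ^ 2 / 4 * C2diag F (x - h / 2))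
      =O[nhds 0] fun h : ℝ => h ^ 4 := by
  have h1 : ∀ t : ℝ, HasDerivAt (fun h : ℝ => F (((x, x) : ℝ × ℝ) + h • (((-1:ℝ), (0:ℝ)) : ℝ × ℝ)) + F (((x, x) : ℝ × ℝ) + h • (((0:ℝ), (-1:ℝ)) : ℝ × ℝ)))
      (fderiv ℝ F (((x, x) : ℝ × ℝ) + t • (((-1:ℝ), (0:ℝ)) : ℝ × ℝ)) (((-1:ℝ), (0:ℝ)) : ℝ × ℝ) + fderiv ℝ F (((x, x) : ℝ × ℝ) + t • (((0:ℝ), (-1:ℝ)) : ℝ × ℝ)) (((0:ℝ), (-1:ℝ)) : ℝ × ℝ)) t :=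
    fun t => (chain_line F (hd0 hF) ((x, x) : ℝ × ℝ) (((-1:ℝ), (0:ℝ)) : ℝ × ℝ) t).add (chain_line F (hd0 hF) ((x, x) : ℝ × ℝ) (((0:ℝ), (-1:ℝ)) : ℝ × ℝ) t)
  have h2 : ∀ t : ℝ, HasDerivAt (fun t : ℝ => fderiv ℝ F (((x, x) : ℝ × ℝ) + t • (((-1:ℝ), (0:ℝ)) : ℝ × ℝ)) (((-1:ℝ), (0:ℝ)) : ℝ × ℝ) + fderiv ℝ F (((x, x) : ℝ × ℝ) + t • (((0:ℝ), (-1:ℝ)) : ℝ × ℝ)) (((0:ℝ), (-1:ℝ)) : ℝ × ℝ))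
      (fderiv ℝ (fderiv ℝ F) (((x, x) : ℝ × ℝ) + t • (((-1:ℝ), (0:ℝ)) : ℝ × ℝ)) (((-1:ℝ), (0:ℝ)) : ℝ × ℝ) (((-1:ℝ), (0:ℝ)) : ℝ × ℝ) + fderiv ℝ (fderiv ℝ F) (((x, x) : ℝ × ℝ) + t • (((0:ℝ), (-1:ℝ)) : ℝ × ℝ)) (((0:ℝ), (-1:ℝ)) : ℝ × ℝ) (((0:ℝ), (-1:ℝ)) : ℝ × ℝ)) t :=
    fun t => (L2 hF ((x, x) : ℝ × ℝ) (((-1:ℝ), (0:ℝ)) : ℝ × ℝ) (((-1:ℝ), (0:ℝ)) : ℝ × ℝ) t).add (L2 hF ((x, x) : ℝ × ℝ) (((0:ℝ), (-1:ℝ)) : ℝ × ℝ) (((0:ℝ), (-1:ℝ)) : ℝ × ℝ) t)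
  have h3 : ∀ t : ℝ, HasDerivAt (fun t : ℝ => fderiv ℝ (fderiv ℝ F) (((x, x) : ℝ × ℝ) + t • (((-1:ℝ), (0:ℝ)) : ℝ × ℝ)) (((-1:ℝ), (0:ℝ)) : ℝ × ℝ) (((-1:ℝ), (0:ℝ)) : ℝ × ℝ) + fderiv ℝ (fderiv ℝ F) (((x, x) : ℝ × ℝ) + t • (((0:ℝ), (-1:ℝ)) : ℝ × ℝ)) (((0:ℝ), (-1:ℝ)) : ℝ × ℝ) (((0:ℝ), (-1:ℝ)) : ℝ × ℝ))
      (fderiv ℝ (fderiv ℝ (fderiv ℝ F)) (((x, x) : ℝ × ℝ) + t • (((-1:ℝ), (0:ℝ)) : ℝ × ℝ)) (((-1:ℝ), (0:ℝ)) : ℝ × ℝ) (((-1:ℝ), (0:ℝ)) : ℝ × ℝ) (((-1:ℝ), (0:ℝ)) : ℝ × ℝ)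
        + fderiv ℝ (fderiv ℝ (fderiv ℝ F)) (((x, x) : ℝ × ℝ) + t • (((0:ℝ), (-1:ℝ)) : ℝ × ℝ)) (((0:ℝ), (-1:ℝ)) : ℝ × ℝ) (((0:ℝ), (-1:ℝ)) : ℝ × ℝ) (((0:ℝ), (-1:ℝ)) : ℝ × ℝ)) t :=
    fun t => (L3 hF ((x, x) : ℝ × ℝ) (((-1:ℝ), (0:ℝ)) : ℝ × ℝ) (((-1:ℝ), (0:ℝ)) : ℝ × ℝ) (((-1:ℝ), (0:ℝ)) : ℝ × ℝ) t).add (L3 hF ((x, x) : ℝ × ℝ) (((0:ℝ), (-1:ℝ)) : ℝ × ℝ) (((0:ℝ), (-1:ℝ)) : ℝ × ℝ) (((0:ℝ), (-1:ℝ)) : ℝ × ℝ) t)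
  have h4 : DifferentiableAt ℝ (fun t : ℝ => fderiv ℝ (fderiv ℝ (fderiv ℝ F)) (((x, x) : ℝ × ℝ) + t • (((-1:ℝ), (0:ℝ)) : ℝ × ℝ)) (((-1:ℝ), (0:ℝ)) : ℝ × ℝ) (((-1:ℝ), (0:ℝ)) : ℝ × ℝ) (((-1:ℝ), (0:ℝ)) : ℝ × ℝ)
      + fderiv ℝ (fderiv ℝ (fderiv ℝ F)) (((x, x) : ℝ × ℝ) + t • (((0:ℝ), (-1:ℝ)) : ℝ × ℝ)) (((0:ℝ), (-1:ℝ)) : ℝ × ℝ) (((0:ℝ), (-1:ℝ)) : ℝ × ℝ) (((0:ℝ), (-1:ℝ)) : ℝ × ℝ)) 0 :=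
    ((L4 hF ((x, x) : ℝ × ℝ) (((-1:ℝ), (0:ℝ)) : ℝ × ℝ) (((-1:ℝ), (0:ℝ)) : ℝ × ℝ) (((-1:ℝ), (0:ℝ)) : ℝ × ℝ) (((-1:ℝ), (0:ℝ)) : ℝ × ℝ) 0).differentiableAt).add ((L4 hF ((x, x) : ℝ × ℝ) (((0:ℝ), (-1:ℝ)) : ℝ × ℝ) (((0:ℝ), (-1:ℝ)) : ℝ × ℝ) (((0:ℝ), (-1:ℝ)) : ℝ × ℝ) (((0:ℝ), (-1:ℝ)) : ℝ × ℝ) 0).differentiableAt)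
  have hO1 := lemT4 _ _ _ _ h1 h2 h3 h4
  have hO2 := lemT2 (fun t : ℝ => fderiv ℝ (fderiv ℝ F) (((x, x) : ℝ × ℝ) + t • (((-(1/2):ℝ), (-(1/2):ℝ)) : ℝ × ℝ)) (((1:ℝ), (-1:ℝ)) : ℝ × ℝ) (((1:ℝ), (-1:ℝ)) : ℝ × ℝ))
      (fun t : ℝ => fderiv ℝ (fderiv ℝ (fderiv ℝ F)) (((x, x) : ℝ × ℝ) + t • (((-(1/2):ℝ), (-(1/2):ℝ)) : ℝ × ℝ)) (((-(1/2):ℝ), (-(1/2):ℝ)) : ℝ × ℝ) (((1:ℝ), (-1:ℝ)) : ℝ × ℝ) (((1:ℝ), (-1:ℝ)) : ℝ × ℝ))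
      (fun t => L3 hF ((x, x) : ℝ × ℝ) (((-(1/2):ℝ), (-(1/2):ℝ)) : ℝ × ℝ) (((1:ℝ), (-1:ℝ)) : ℝ × ℝ) (((1:ℝ), (-1:ℝ)) : ℝ × ℝ) t) (L4 hF ((x, x) : ℝ × ℝ) (((-(1/2):ℝ), (-(1/2):ℝ)) : ℝ × ℝ) (((-(1/2):ℝ), (-(1/2):ℝ)) : ℝ × ℝ) (((1:ℝ), (-1:ℝ)) : ℝ × ℝ) (((1:ℝ), (-1:ℝ)) : ℝ × ℝ) 0).differentiableAt
  have hO2' : (fun h : ℝ => 1/4 * h ^ 2 *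
      ((fun t : ℝ => fderiv ℝ (fderiv ℝ F) (((x, x) : ℝ × ℝ) + t • (((-(1/2):ℝ), (-(1/2):ℝ)) : ℝ × ℝ)) (((1:ℝ), (-1:ℝ)) : ℝ × ℝ) (((1:ℝ), (-1:ℝ)) : ℝ × ℝ)) h
        - (fun t : ℝ => fderiv ℝ (fderiv ℝ F) (((x, x) : ℝ × ℝ) + t • (((-(1/2):ℝ), (-(1/2):ℝ)) : ℝ × ℝ)) (((1:ℝ), (-1:ℝ)) : ℝ × ℝ) (((1:ℝ), (-1:ℝ)) : ℝ × ℝ)) 0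
        - (fun t : ℝ => fderiv ℝ (fderiv ℝ (fderiv ℝ F)) (((x, x) : ℝ × ℝ) + t • (((-(1/2):ℝ), (-(1/2):ℝ)) : ℝ × ℝ)) (((-(1/2):ℝ), (-(1/2):ℝ)) : ℝ × ℝ) (((1:ℝ), (-1:ℝ)) : ℝ × ℝ) (((1:ℝ), (-1:ℝ)) : ℝ × ℝ)) 0 * h))
      =O[nhds 0] fun h : ℝ => h ^ 4 := by
    have hmul := (isBigO_refl (fun h : ℝ => 1/4 * h ^ 2) (nhds 0)).mul hO2
    have e : (fun h : ℝ => 1/4 * h ^ 2 * h ^ 2) = fun h : ℝ => 1/4 * h ^ 4 := by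
      funext h; ring
    refine hmul.trans ?_
    rw [e]
    exact (isBigO_refl (fun h : ℝ => h ^ 4) _).const_mul_left (1/4)
  -- point and value identities
  have ea : ∀ h : ℝ, ((x, x) : ℝ × ℝ) + h • (((-1:ℝ), (0:ℝ)) : ℝ × ℝ) = (x - h, x) := by
    intro h; simp [Prod.ext_iff]; ring
  have eb : ∀ h : ℝ, ((x, x) : ℝ × ℝ) + h • (((0:ℝ), (-1:ℝ)) : ℝ × ℝ) = (x, x - h) := by
    intro h; simp [Prod.ext_iff]; ring
  have hm : ∀ h : ℝ, C2diag F (x - h / 2) = fderiv ℝ (fderiv ℝ F) (((x, x) : ℝ × ℝ) + h • (((-(1/2):ℝ), (-(1/2):ℝ)) : ℝ × ℝ)) (((1:ℝ), (-1:ℝ)) : ℝ × ℝ) (((1:ℝ), (-1:ℝ)) : ℝ × ℝ) := by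
    intro h
    rw [c2diag_eq hF (x - h / 2)]
    congr 2 <;> simp [Prod.ext_iff] <;> ring
  have cf1 : fderiv ℝ F ((x, x) : ℝ × ℝ) (((-1:ℝ), (0:ℝ)) : ℝ × ℝ) + fderiv ℝ F ((x, x) : ℝ × ℝ) (((0:ℝ), (-1:ℝ)) : ℝ × ℝ) = 0 := by
    have hab : (((-1:ℝ), (0:ℝ)) : ℝ × ℝ) + (((0:ℝ), (-1:ℝ)) : ℝ × ℝ) = -((1:ℝ), (1:ℝ)) := by simp [Prod.ext_iff]
    rw [← map_add, hab, map_neg, diag1 hF hdiag x, neg_zero]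
  have cf2 : fderiv ℝ (fderiv ℝ F) ((x, x) : ℝ × ℝ) (((1:ℝ), (-1:ℝ)) : ℝ × ℝ) (((1:ℝ), (-1:ℝ)) : ℝ × ℝ)
      = 2 * (fderiv ℝ (fderiv ℝ F) ((x, x) : ℝ × ℝ) (((-1:ℝ), (0:ℝ)) : ℝ × ℝ) (((-1:ℝ), (0:ℝ)) : ℝ × ℝ) + fderiv ℝ (fderiv ℝ F) ((x, x) : ℝ × ℝ) (((0:ℝ), (-1:ℝ)) : ℝ × ℝ) (((0:ℝ), (-1:ℝ)) : ℝ × ℝ)) := by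
    have h0 := diag2 hF hdiag x
    rw [show ((1:ℝ), (1:ℝ)) = -((((-1:ℝ), (0:ℝ)) : ℝ × ℝ) + (((0:ℝ), (-1:ℝ)) : ℝ × ℝ)) by simp [Prod.ext_iff]] at h0
    rw [show ((((1:ℝ), (-1:ℝ)) : ℝ × ℝ) : ℝ × ℝ) = (((0:ℝ), (-1:ℝ)) : ℝ × ℝ) - (((-1:ℝ), (0:ℝ)) : ℝ × ℝ) by simp [Prod.ext_iff]]
    simp only [map_sub, map_neg, map_add, ContinuousLinearMap.sub_apply,
      ContinuousLinearMap.neg_apply, ContinuousLinearMap.add_apply] at h0 ⊢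
    linarith
  have cf3 : 2 * (fderiv ℝ (fderiv ℝ (fderiv ℝ F)) ((x, x) : ℝ × ℝ) (((-1:ℝ), (0:ℝ)) : ℝ × ℝ) (((-1:ℝ), (0:ℝ)) : ℝ × ℝ) (((-1:ℝ), (0:ℝ)) : ℝ × ℝ)
        + fderiv ℝ (fderiv ℝ (fderiv ℝ F)) ((x, x) : ℝ × ℝ) (((0:ℝ), (-1:ℝ)) : ℝ × ℝ) (((0:ℝ), (-1:ℝ)) : ℝ × ℝ) (((0:ℝ), (-1:ℝ)) : ℝ × ℝ))
      = 3 * fderiv ℝ (fderiv ℝ (fderiv ℝ F)) ((x, x) : ℝ × ℝ) (((-(1/2):ℝ), (-(1/2):ℝ)) : ℝ × ℝ) (((1:ℝ), (-1:ℝ)) : ℝ × ℝ) (((1:ℝ), (-1:ℝ)) : ℝ × ℝ) := by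
    have hTexp : fderiv ℝ (fderiv ℝ (fderiv ℝ F)) ((x, x) : ℝ × ℝ) ((((1:ℝ), (0:ℝ)) : ℝ × ℝ) + (((0:ℝ), (1:ℝ)) : ℝ × ℝ)) ((((1:ℝ), (0:ℝ)) : ℝ × ℝ) - (((0:ℝ), (1:ℝ)) : ℝ × ℝ)) ((((1:ℝ), (0:ℝ)) : ℝ × ℝ) - (((0:ℝ), (1:ℝ)) : ℝ × ℝ))
        + fderiv ℝ (fderiv ℝ (fderiv ℝ F)) ((x, x) : ℝ × ℝ) ((((1:ℝ), (0:ℝ)) : ℝ × ℝ) - (((0:ℝ), (1:ℝ)) : ℝ × ℝ)) ((((1:ℝ), (0:ℝ)) : ℝ × ℝ) + (((0:ℝ), (1:ℝ)) : ℝ × ℝ)) ((((1:ℝ), (0:ℝ)) : ℝ × ℝ) - (((0:ℝ), (1:ℝ)) : ℝ × ℝ))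
        + fderiv ℝ (fderiv ℝ (fderiv ℝ F)) ((x, x) : ℝ × ℝ) ((((1:ℝ), (0:ℝ)) : ℝ × ℝ) - (((0:ℝ), (1:ℝ)) : ℝ × ℝ)) ((((1:ℝ), (0:ℝ)) : ℝ × ℝ) - (((0:ℝ), (1:ℝ)) : ℝ × ℝ)) ((((1:ℝ), (0:ℝ)) : ℝ × ℝ) + (((0:ℝ), (1:ℝ)) : ℝ × ℝ))
        + fderiv ℝ (fderiv ℝ (fderiv ℝ F)) ((x, x) : ℝ × ℝ) ((((1:ℝ), (0:ℝ)) : ℝ × ℝ) + (((0:ℝ), (1:ℝ)) : ℝ × ℝ)) ((((1:ℝ), (0:ℝ)) : ℝ × ℝ) + (((0:ℝ), (1:ℝ)) : ℝ × ℝ)) ((((1:ℝ), (0:ℝ)) : ℝ × ℝ) + (((0:ℝ), (1:ℝ)) : ℝ × ℝ))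
        = 4 * (fderiv ℝ (fderiv ℝ (fderiv ℝ F)) ((x, x) : ℝ × ℝ) (((1:ℝ), (0:ℝ)) : ℝ × ℝ) (((1:ℝ), (0:ℝ)) : ℝ × ℝ) (((1:ℝ), (0:ℝ)) : ℝ × ℝ)
          + fderiv ℝ (fderiv ℝ (fderiv ℝ F)) ((x, x) : ℝ × ℝ) (((0:ℝ), (1:ℝ)) : ℝ × ℝ) (((0:ℝ), (1:ℝ)) : ℝ × ℝ) (((0:ℝ), (1:ℝ)) : ℝ × ℝ)) := by
      simp only [map_add, map_sub, ContinuousLinearMap.add_apply, ContinuousLinearMap.sub_apply]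
      ring
    have hperm1 : fderiv ℝ (fderiv ℝ (fderiv ℝ F)) ((x, x) : ℝ × ℝ) ((((1:ℝ), (0:ℝ)) : ℝ × ℝ) - (((0:ℝ), (1:ℝ)) : ℝ × ℝ)) ((((1:ℝ), (0:ℝ)) : ℝ × ℝ) + (((0:ℝ), (1:ℝ)) : ℝ × ℝ)) ((((1:ℝ), (0:ℝ)) : ℝ × ℝ) - (((0:ℝ), (1:ℝ)) : ℝ × ℝ))
        = fderiv ℝ (fderiv ℝ (fderiv ℝ F)) ((x, x) : ℝ × ℝ) ((((1:ℝ), (0:ℝ)) : ℝ × ℝ) + (((0:ℝ), (1:ℝ)) : ℝ × ℝ)) ((((1:ℝ), (0:ℝ)) : ℝ × ℝ) - (((0:ℝ), (1:ℝ)) : ℝ × ℝ)) ((((1:ℝ), (0:ℝ)) : ℝ × ℝ) - (((0:ℝ), (1:ℝ)) : ℝ × ℝ)) :=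
      sym12 hF ((x, x) : ℝ × ℝ) _ _ _
    have hperm2 : fderiv ℝ (fderiv ℝ (fderiv ℝ F)) ((x, x) : ℝ × ℝ) ((((1:ℝ), (0:ℝ)) : ℝ × ℝ) - (((0:ℝ), (1:ℝ)) : ℝ × ℝ)) ((((1:ℝ), (0:ℝ)) : ℝ × ℝ) - (((0:ℝ), (1:ℝ)) : ℝ × ℝ)) ((((1:ℝ), (0:ℝ)) : ℝ × ℝ) + (((0:ℝ), (1:ℝ)) : ℝ × ℝ))
        = fderiv ℝ (fderiv ℝ (fderiv ℝ F)) ((x, x) : ℝ × ℝ) ((((1:ℝ), (0:ℝ)) : ℝ × ℝ) + (((0:ℝ), (1:ℝ)) : ℝ × ℝ)) ((((1:ℝ), (0:ℝ)) : ℝ × ℝ) - (((0:ℝ), (1:ℝ)) : ℝ × ℝ)) ((((1:ℝ), (0:ℝ)) : ℝ × ℝ) - (((0:ℝ), (1:ℝ)) : ℝ × ℝ)) := by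
      rw [sym23 hF ((x, x) : ℝ × ℝ) ((((1:ℝ), (0:ℝ)) : ℝ × ℝ) - (((0:ℝ), (1:ℝ)) : ℝ × ℝ)) ((((1:ℝ), (0:ℝ)) : ℝ × ℝ) - (((0:ℝ), (1:ℝ)) : ℝ × ℝ)) ((((1:ℝ), (0:ℝ)) : ℝ × ℝ) + (((0:ℝ), (1:ℝ)) : ℝ × ℝ))]; exact hperm1
    have hz : fderiv ℝ (fderiv ℝ (fderiv ℝ F)) ((x, x) : ℝ × ℝ) ((((1:ℝ), (0:ℝ)) : ℝ × ℝ) + (((0:ℝ), (1:ℝ)) : ℝ × ℝ)) ((((1:ℝ), (0:ℝ)) : ℝ × ℝ) + (((0:ℝ), (1:ℝ)) : ℝ × ℝ)) ((((1:ℝ), (0:ℝ)) : ℝ × ℝ) + (((0:ℝ), (1:ℝ)) : ℝ × ℝ)) = 0 := by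
      have := diag3 hF hdiag x
      rwa [show ((1:ℝ), (1:ℝ)) = (((1:ℝ), (0:ℝ)) : ℝ × ℝ) + (((0:ℝ), (1:ℝ)) : ℝ × ℝ) by simp [Prod.ext_iff]] at this
    have hA3 : fderiv ℝ (fderiv ℝ (fderiv ℝ F)) ((x, x) : ℝ × ℝ) (((-1:ℝ), (0:ℝ)) : ℝ × ℝ) (((-1:ℝ), (0:ℝ)) : ℝ × ℝ) (((-1:ℝ), (0:ℝ)) : ℝ × ℝ)
        = -(fderiv ℝ (fderiv ℝ (fderiv ℝ F)) ((x, x) : ℝ × ℝ) (((1:ℝ), (0:ℝ)) : ℝ × ℝ) (((1:ℝ), (0:ℝ)) : ℝ × ℝ) (((1:ℝ), (0:ℝ)) : ℝ × ℝ)) := by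
      rw [show ((((-1:ℝ), (0:ℝ)) : ℝ × ℝ) : ℝ × ℝ) = -(((1:ℝ), (0:ℝ)) : ℝ × ℝ) by simp [Prod.ext_iff]]
      simp only [map_neg, ContinuousLinearMap.neg_apply, neg_neg]
    have hB3 : fderiv ℝ (fderiv ℝ (fderiv ℝ F)) ((x, x) : ℝ × ℝ) (((0:ℝ), (-1:ℝ)) : ℝ × ℝ) (((0:ℝ), (-1:ℝ)) : ℝ × ℝ) (((0:ℝ), (-1:ℝ)) : ℝ × ℝ)
        = -(fderiv ℝ (fderiv ℝ (fderiv ℝ F)) ((x, x) : ℝ × ℝ) (((0:ℝ), (1:ℝ)) : ℝ × ℝ) (((0:ℝ), (1:ℝ)) : ℝ × ℝ) (((0:ℝ), (1:ℝ)) : ℝ × ℝ)) := by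
      rw [show ((((0:ℝ), (-1:ℝ)) : ℝ × ℝ) : ℝ × ℝ) = -(((0:ℝ), (1:ℝ)) : ℝ × ℝ) by simp [Prod.ext_iff]]
      simp only [map_neg, ContinuousLinearMap.neg_apply, neg_neg]
    have hV3 : fderiv ℝ (fderiv ℝ (fderiv ℝ F)) ((x, x) : ℝ × ℝ) (((-(1/2):ℝ), (-(1/2):ℝ)) : ℝ × ℝ) (((1:ℝ), (-1:ℝ)) : ℝ × ℝ) (((1:ℝ), (-1:ℝ)) : ℝ × ℝ)
        = -(1/2) * fderiv ℝ (fderiv ℝ (fderiv ℝ F)) ((x, x) : ℝ × ℝ) ((((1:ℝ), (0:ℝ)) : ℝ × ℝ) + (((0:ℝ), (1:ℝ)) : ℝ × ℝ)) ((((1:ℝ), (0:ℝ)) : ℝ × ℝ) - (((0:ℝ), (1:ℝ)) : ℝ × ℝ)) ((((1:ℝ), (0:ℝ)) : ℝ × ℝ) - (((0:ℝ), (1:ℝ)) : ℝ × ℝ)) := by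
      rw [show ((((-(1/2):ℝ), (-(1/2):ℝ)) : ℝ × ℝ) : ℝ × ℝ) = (-(1/2) : ℝ) • ((((1:ℝ), (0:ℝ)) : ℝ × ℝ) + (((0:ℝ), (1:ℝ)) : ℝ × ℝ)) by simp [Prod.ext_iff],
        show ((((1:ℝ), (-1:ℝ)) : ℝ × ℝ) : ℝ × ℝ) = (((1:ℝ), (0:ℝ)) : ℝ × ℝ) - (((0:ℝ), (1:ℝ)) : ℝ × ℝ) by simp [Prod.ext_iff]]
      simp only [map_smul, ContinuousLinearMap.smul_apply, smul_eq_mul]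
    rw [hA3, hB3, hV3]
    linarith
  refine (hO1.sub hO2').congr_left ?_
  intro h
  simp only [zero_smul, add_zero]
  rw [ea h, eb h, hm h]
  rw [hdiag x]
  linear_combination (-h) * cf1 + (h^2/4) * cf2 - (h^3/12) * cf3

end MainProof

/-- Taylor expansion of the local averaging term: for a `C⁴` correlation function
`F` with unit diagonal,
`F(x−h,x) + F(x,x−h) − 2 − (h²/4) C₂(x − h/2) = O(h⁴)` as `h → 0`. -/
theorem local_average_expansion
    (F : ℝ × ℝ → ℝ) (hF : ContDiff ℝ 4 F) (hdiag : ∀ x : ℝ, F (x, x) = 1) :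
    ∀ x : ℝ,
      (fun h : ℝ => F (x - h, x) + F (x, x - h) - 2 - h ^ 2 / 4 * C2diag F (x - h / 2))
        =O[nhds 0] fun h : ℝ => h ^ 4 := by
  intro x
  exact bigO_aux hF hdiag x
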